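/- Let F̂(z) = Mz + G(z) be a lift of a torus map satisfying the expanding-block assumption, and let Φ̂(z) = lim_{n→∞} A^{−n} P(F̂^n(z)). Then Φ̂ admits the series representation Φ̂(z) = P z + Σ_{j=1}^{∞} A^{−j} P(G(F̂^{j−1}(z))), where the series converges uniformly in z ∈ ℝ^d. -/

import Mathlib

open Filter Topology

noncomputable section

/-- Reinterpret a vector `Fin d → ℝ` as a point of Euclidean space `ℝ^d`. -/
def toEuc (d : ℕ) (v : Fin d → ℝ) : EuclideanSpace ℝ (Fin d) := WithLp.toLp 2 v

/-- Projection onto the first `k` coordinates of `ℝ^d`. -/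
def projP (d k : ℕ) (h : k ≤ d) (z : EuclideanSpace ℝ (Fin d)) :
    EuclideanSpace ℝ (Fin k) :=
  WithLp.toLp 2 (fun i => z (Fin.castLE h i))

lemma projP_add (d k : ℕ) (h : k ≤ d) (x y : EuclideanSpace ℝ (Fin d)) :
    projP d k h (x + y) = projP d k h x + projP d k h y := by
  ext i; rfl

lemma norm_projP_le (d k : ℕ) (h : k ≤ d) (z : EuclideanSpace ℝ (Fin d)) :
    ‖projP d k h z‖ ≤ ‖z‖ := by
  rw [EuclideanSpace.norm_eq, EuclideanSpace.norm_eq]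
  apply Real.sqrt_le_sqrt
  have : ∑ i : Fin k, ‖projP d k h z i‖ ^ 2
      = ∑ j ∈ Finset.univ.map (Fin.castLEEmb h), ‖z j‖ ^ 2 := by
    rw [Finset.sum_map]; rfl
  rw [this]
  apply Finset.sum_le_sum_of_subset_of_nonneg (Finset.subset_univ _)
  intro j _ _
  positivity

lemma clequiv_pow_norm_le {E : Type*} [NormedAddCommGroup E] [NormedSpace ℝ E]
    (e : E ≃L[ℝ] E) (n : ℕ) (x : E) :
    ‖(e ^ n) x‖ ≤ ‖(e : E →L[ℝ] E)‖ ^ n * ‖x‖ := by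
  induction n generalizing x with
  | zero =>
    simp only [pow_zero, one_mul]
    exact le_of_eq rfl
  | succ n ih =>
    have h1 : (e ^ (n + 1)) x = (e ^ n) (e x) := by rw [pow_succ]; rfl
    rw [h1]
    calc ‖(e ^ n) (e x)‖ ≤ ‖(e : E →L[ℝ] E)‖ ^ n * ‖e x‖ := ih _
      _ ≤ ‖(e : E →L[ℝ] E)‖ ^ n * (‖(e : E →L[ℝ] E)‖ * ‖x‖) := by
          apply mul_le_mul_of_nonneg_left (e.toContinuousLinearMap.le_opNorm x)
          positivity
      _ = ‖(e : E →L[ℝ] E)‖ ^ (n + 1) * ‖x‖ := by ring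

/--
Let `F̂(z) = Mz + G(z)` be a lift of a torus map satisfying the
expanding-block assumption, and let `Φ̂(z) = lim_{n→∞} A⁻ⁿ P(F̂ⁿ(z))`. Then `Φ̂` admits the
series representation `Φ̂(z) = P z + Σ_{j=1}^{∞} A⁻ʲ P(G(F̂^{j−1}(z)))`, where the series
converges uniformly in `z ∈ ℝ^d`.
-/
theorem stmt1 (d k : ℕ) (hk : 1 ≤ k) (hkd : k ≤ d)
    (M : Matrix (Fin d) (Fin d) ℝ) (hMint : ∀ i j, ∃ n : ℤ, M i j = (n : ℝ))
    (G : EuclideanSpace ℝ (Fin d) → EuclideanSpace ℝ (Fin d))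
    (hGcont : Continuous G) (hGbdd : ∃ C, ∀ z, ‖G z‖ ≤ C)
    (hGper : ∀ (z : EuclideanSpace ℝ (Fin d)) (p : Fin d → ℤ),
      G (z + toEuc d fun i => (p i : ℝ)) = G z)
    (F : EuclideanSpace ℝ (Fin d) → EuclideanSpace ℝ (Fin d))
    (hF : ∀ z, F z = toEuc d (M.mulVec z) + G z)
    (A : EuclideanSpace ℝ (Fin k) ≃L[ℝ] EuclideanSpace ℝ (Fin k))
    (hPM : ∀ z : EuclideanSpace ℝ (Fin d),
      projP d k hkd (toEuc d (M.mulVec z)) = A (projP d k hkd z))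
    (hA : ‖(A.symm : EuclideanSpace ℝ (Fin k) →L[ℝ] EuclideanSpace ℝ (Fin k))‖ < 1)
    (Φ : EuclideanSpace ℝ (Fin d) → EuclideanSpace ℝ (Fin k))
    (hΦ : ∀ z, Tendsto (fun n : ℕ => (A.symm ^ n) (projP d k hkd (F^[n] z)))
      atTop (𝓝 (Φ z))) :
    TendstoUniformly (fun (N : ℕ) (z : EuclideanSpace ℝ (Fin d)) =>
        projP d k hkd z +
          ∑ j ∈ Finset.range N, (A.symm ^ (j + 1)) (projP d k hkd (G (F^[j] z))))
      Φ atTop := by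
  classical
  set r : ℝ := ‖(A.symm : EuclideanSpace ℝ (Fin k) →L[ℝ] EuclideanSpace ℝ (Fin k))‖ with hr
  have hr0 : 0 ≤ r := norm_nonneg _
  obtain ⟨C, hC⟩ := hGbdd
  have hC0 : 0 ≤ C := le_trans (norm_nonneg _) (hC 0)
  -- the partial sums
  set S : ℕ → EuclideanSpace ℝ (Fin d) → EuclideanSpace ℝ (Fin k) :=
    fun N z => projP d k hkd z +
      ∑ j ∈ Finset.range N, (A.symm ^ (j + 1)) (projP d k hkd (G (F^[j] z))) with hS
  -- key identity
  have key : ∀ (N : ℕ) (z : EuclideanSpace ℝ (Fin d)),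
      (A.symm ^ N) (projP d k hkd (F^[N] z)) = S N z := by
    intro N z
    induction N with
    | zero =>
      simp only [hS, pow_zero, Finset.range_zero, Finset.sum_empty, add_zero]
      rfl
    | succ N ih =>
      have hiter : F^[N + 1] z = F (F^[N] z) := Function.iterate_succ_apply' F N z
      have hPF : projP d k hkd (F (F^[N] z))
          = A (projP d k hkd (F^[N] z)) + projP d k hkd (G (F^[N] z)) := by
        rw [hF, projP_add, hPM]
      have hpow : ∀ x, (A.symm ^ (N + 1)) x = (A.symm ^ N) (A.symm x) := by
        intro x; rw [pow_succ]; rfl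
      have : (A.symm ^ (N + 1)) (projP d k hkd (F^[N + 1] z))
          = (A.symm ^ N) (projP d k hkd (F^[N] z))
            + (A.symm ^ (N + 1)) (projP d k hkd (G (F^[N] z))) := by
        rw [hiter, hPF, hpow, map_add, A.symm_apply_apply, map_add, ← hpow]
      rw [this, ih, hS]
      simp [Finset.sum_range_succ, add_assoc]
  -- bound on each term of the series
  have term_bound : ∀ (j : ℕ) (z : EuclideanSpace ℝ (Fin d)),
      ‖(A.symm ^ (j + 1)) (projP d k hkd (G (F^[j] z)))‖ ≤ C * r ^ (j + 1) := by
    intro j z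
    calc ‖(A.symm ^ (j + 1)) (projP d k hkd (G (F^[j] z)))‖
        ≤ r ^ (j + 1) * ‖projP d k hkd (G (F^[j] z))‖ := clequiv_pow_norm_le _ _ _
      _ ≤ r ^ (j + 1) * C := by
          apply mul_le_mul_of_nonneg_left _ (by positivity)
          exact le_trans (norm_projP_le _ _ _ _) (hC _)
      _ = C * r ^ (j + 1) := mul_comm _ _
  -- bound between partial sums
  have Sdiff : ∀ (N m : ℕ) (z : EuclideanSpace ℝ (Fin d)), N ≤ m →
      ‖S m z - S N z‖ ≤ C * r * (r ^ N / (1 - r)) := by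
    intro N m z hNm
    have hsub : S m z - S N z
        = ∑ j ∈ Finset.Ico N m, (A.symm ^ (j + 1)) (projP d k hkd (G (F^[j] z))) := by
      rw [hS]
      simp only [add_sub_add_left_eq_sub]
      rw [← Finset.sum_Ico_eq_sub _ hNm]
    rw [hsub]
    calc ‖∑ j ∈ Finset.Ico N m, (A.symm ^ (j + 1)) (projP d k hkd (G (F^[j] z)))‖
        ≤ ∑ j ∈ Finset.Ico N m, C * r ^ (j + 1) :=
          norm_sum_le_of_le _ (fun j _ => term_bound j z)
      _ = C * r * ∑ j ∈ Finset.Ico N m, r ^ j := by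
          rw [Finset.mul_sum]; apply Finset.sum_congr rfl; intro j _; ring
      _ ≤ C * r * (r ^ N / (1 - r)) := by
          apply mul_le_mul_of_nonneg_left (geom_sum_Ico_le_of_lt_one hr0 hA)
          positivity
  -- bound between Φ and partial sums
  have Φbound : ∀ (N : ℕ) (z : EuclideanSpace ℝ (Fin d)),
      ‖Φ z - S N z‖ ≤ C * r * (r ^ N / (1 - r)) := by
    intro N z
    have hlim : Tendsto (fun m : ℕ => ‖S m z - S N z‖) atTop (𝓝 ‖Φ z - S N z‖) := by
      apply Tendsto.norm
      apply Tendsto.sub_const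
      have := hΦ z
      simpa only [key] using this
    apply le_of_tendsto hlim
    filter_upwards [eventually_ge_atTop N] with m hm
    exact Sdiff N m z hm
  -- conclude uniform convergence
  rw [Metric.tendstoUniformly_iff]
  intro ε hε
  have hb : Tendsto (fun N : ℕ => C * r * (r ^ N / (1 - r))) atTop (𝓝 0) := by
    have : Tendsto (fun N : ℕ => r ^ N) atTop (𝓝 0) :=
      tendsto_pow_atTop_nhds_zero_of_lt_one hr0 hA
    have h2 : Tendsto (fun N : ℕ => C * r * (r ^ N / (1 - r))) atTop
        (𝓝 (C * r * (0 / (1 - r)))) := by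
      apply Tendsto.const_mul
      exact this.div_const _
    simpa using h2
  filter_upwards [hb.eventually (gt_mem_nhds hε)] with N hN z
  rw [dist_eq_norm]
  exact lt_of_le_of_lt (Φbound N z) hN
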